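/- Let S = { k − 2^{−l} − 2^{−l−m} : k,l,m ≥ 1 } ∪ { k − 2^{−l} : k,l ≥ 1 } ∪ { 0,1,2,… }. Then S is closed, countable, 1-periodic, well-ordered by <, and its second derived set S'' = { 1, 2, 3, … } is nonempty. -/

import Mathlib

/-- The set `S = {k − 2^{−l} − 2^{−l−m}} ∪ {k − 2^{−l}} ∪ ℕ` (k, l, m ≥ 1). -/
def exampleS₂ : Set ℝ :=
  {x : ℝ | ∃ k l m : ℕ, 1 ≤ k ∧ 1 ≤ l ∧ 1 ≤ m ∧
      x = (k : ℝ) - (2 : ℝ) ^ (-(l : ℤ)) - (2 : ℝ) ^ (-((l : ℤ) + (m : ℤ)))} ∪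
    {x : ℝ | ∃ k l : ℕ, 1 ≤ k ∧ 1 ≤ l ∧ x = (k : ℝ) - (2 : ℝ) ^ (-(l : ℤ))} ∪
    {x : ℝ | ∃ k : ℕ, x = (k : ℝ)}

open Filter Topology Set

private noncomputable def q (n : ℕ) : ℝ := (2:ℝ) ^ (-(n:ℤ))

private lemma q_eq (n : ℕ) : q n = (1/2:ℝ) ^ n := by
  rw [q, zpow_neg, zpow_natCast]
  rw [← inv_pow]
  norm_num

private lemma q_pos (n : ℕ) : 0 < q n := by rw [q_eq]; positivity

private lemma q_anti {a b : ℕ} (h : a ≤ b) : q b ≤ q a := by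
  rw [q_eq, q_eq]; exact pow_le_pow_of_le_one (by norm_num) (by norm_num) h

private lemma q_strictAnti {a b : ℕ} (h : a < b) : q b < q a := by
  rw [q_eq, q_eq]; exact pow_lt_pow_right_of_lt_one₀ (by norm_num) (by norm_num) h

private lemma q_succ (n : ℕ) : q (n+1) = q n / 2 := by rw [q_eq, q_eq, pow_succ]; ring

private lemma q_zero : q 0 = 1 := by rw [q_eq]; norm_num
private lemma q_one : q 1 = 1/2 := by rw [q_eq]; norm_num

private lemma q_le_half {l : ℕ} (h : 1 ≤ l) : q l ≤ 1/2 := q_one ▸ q_anti h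

private lemma q_tendsto : Tendsto q atTop (𝓝 0) := by
  simp only [funext q_eq]
  exact tendsto_pow_atTop_nhds_zero_of_lt_one (by norm_num) (by norm_num)

private lemma q_exists_lt {d : ℝ} (hd : 0 < d) : ∃ n, q n < d := by
  obtain ⟨n, hn⟩ := exists_pow_lt_of_lt_one hd (show (1/2:ℝ) < 1 by norm_num)
  exact ⟨n, by rw [q_eq]; exact hn⟩

private lemma q_cast (l m : ℕ) : (2:ℝ) ^ (-((l:ℤ)+(m:ℤ))) = q (l+m) := by
  rw [q]; push_cast; ring_nf

/-- The set of "offsets" below an integer. -/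
private def V : Set ℝ :=
  {v | (∃ l m : ℕ, 1 ≤ l ∧ 1 ≤ m ∧ v = q l + q (l+m)) ∨ (∃ l : ℕ, 1 ≤ l ∧ v = q l)}

private lemma V_pos {v : ℝ} (hv : v ∈ V) : 0 < v := by
  obtain ⟨l, m, _, _, rfl⟩ | ⟨l, _, rfl⟩ := hv
  · have := q_pos l; have := q_pos (l+m); linarith
  · exact q_pos l

private lemma V_le {v : ℝ} (hv : v ∈ V) : v ≤ 3/4 := by
  obtain ⟨l, m, hl, hm, rfl⟩ | ⟨l, hl, rfl⟩ := hv
  · have h1 : q (l+m) ≤ q (l+1) := q_anti (by omega)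
    have h2 : q (l+1) = q l / 2 := q_succ l
    have h3 : q l ≤ 1/2 := q_le_half hl
    linarith
  · have := q_le_half hl; linarith

private lemma V_gap2 {l : ℕ} (hl : 1 ≤ l) {v : ℝ} (hv : v ∈ V) (h : 3/4 * q l < v) :
    q l ≤ v := by
  obtain ⟨l', m', hl', hm', rfl⟩ | ⟨l', hl', rfl⟩ := hv
  · rcases le_or_gt l' l with h' | h'
    · have := q_anti h'
      have := q_pos (l'+m')
      linarith
    · -- l+1 ≤ l', so v ≤ (3/2) q l' ≤ (3/2) q (l+1) = (3/4) q l
      have h1 : q l' ≤ q (l+1) := q_anti h'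
      have h2 : q (l'+m') ≤ q l' / 2 := by
        have := q_anti (show l'+1 ≤ l'+m' by omega)
        rw [q_succ] at this; linarith
      have h3 : q (l+1) = q l / 2 := q_succ l
      linarith
  · -- q l' > (3/4) q l > q (l+1) forces l' ≤ l
    rcases le_or_gt l' l with h' | h'
    · exact q_anti h'
    · have h1 : q l' ≤ q (l+1) := q_anti h'
      have h3 : q (l+1) = q l / 2 := q_succ l
      have := q_pos l
      linarith

private lemma V_gap3 {l m : ℕ} (hl : 1 ≤ l) (hm : 1 ≤ m) {v : ℝ} (hv : v ∈ V)
    (h1 : q l + q (l+m+1) < v) (h2 : v < q l + q (l+m)) : False := by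
  have hql := q_pos l
  obtain ⟨l', m', hl', hm', rfl⟩ | ⟨l', hl', rfl⟩ := hv
  · rcases lt_trichotomy l' l with h' | heq | h'
    · -- q l' ≥ 2 q l ≥ q l + q (l+m)
      have ha : q l ≤ q l' / 2 := by
        have := q_anti (show l'+1 ≤ l by omega); rw [q_succ] at this; linarith
      have hb : q (l+m) ≤ q l := q_anti (by omega)
      have := q_pos (l'+m')
      linarith
    · -- same l: q (l+m+1) < q (l+m') < q (l+m), impossible
      rw [heq] at h1 h2
      have hc : l + m' ≠ l + m := by
        intro h; rw [h] at h2; linarith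
      rcases lt_or_gt_of_ne hc with h' | h'
      · have := q_strictAnti h'
        linarith
      · have := q_anti (show l+m+1 ≤ l+m' by omega)
        linarith
    · -- l' > l : v ≤ (3/2) q l' ≤ (3/4) q l < q l
      have ha : q l' ≤ q l / 2 := by
        have := q_anti (show l+1 ≤ l' by omega); rw [q_succ] at this; linarith
      have hb : q (l'+m') ≤ q l' := q_anti (by omega)
      have := q_pos (l+m+1)
      linarith
  · rcases lt_trichotomy l' l with h' | heq | h'
    · have ha : q l ≤ q l' / 2 := by
        have := q_anti (show l'+1 ≤ l by omega); rw [q_succ] at this; linarith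
      have hb : q (l+m) ≤ q l := q_anti (by omega)
      linarith
    · rw [heq] at h1; have := q_pos (l+m+1); linarith
    · have ha : q l' ≤ q l := q_anti (by omega)
      have := q_pos (l+m+1)
      linarith

private lemma mem_S_iff {x : ℝ} :
    x ∈ exampleS₂ ↔ (∃ k : ℕ, 1 ≤ k ∧ ∃ v ∈ V, x = (k:ℝ) - v) ∨ (∃ k : ℕ, x = (k:ℝ)) := by
  constructor
  · rintro ((⟨k, l, m, hk, hl, hm, rfl⟩ | ⟨k, l, hk, hl, rfl⟩) | ⟨k, rfl⟩)
    · exact Or.inl ⟨k, hk, q l + q (l+m), Or.inl ⟨l, m, hl, hm, rfl⟩, by simp only [q]; push_cast; ring⟩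
    · exact Or.inl ⟨k, hk, q l, Or.inr ⟨l, hl, rfl⟩, by simp only [q]⟩
    · exact Or.inr ⟨k, rfl⟩
  · rintro (⟨k, hk, v, (⟨l, m, hl, hm, rfl⟩ | ⟨l, hl, rfl⟩), rfl⟩ | ⟨k, rfl⟩)
    · exact Or.inl (Or.inl ⟨k, l, m, hk, hl, hm, by simp only [q]; push_cast; ring⟩)
    · exact Or.inl (Or.inr ⟨k, l, hk, hl, by simp only [q]⟩)
    · exact Or.inr ⟨k, rfl⟩

private lemma S_gap_aux {k : ℕ} (hk : 1 ≤ k) {a b : ℝ} (ha : (k:ℝ) - 1 ≤ a) (hb : b ≤ k)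
    (hV : ∀ v ∈ V, ((k:ℝ) - v) ∉ Ioo a b) (hknot : (k:ℝ) ∉ Ioo a b) :
    ∀ s ∈ exampleS₂, s ∉ Ioo a b := by
  intro s hs hmem
  rcases mem_S_iff.1 hs with ⟨k', hk', v, hv, rfl⟩ | ⟨k', rfl⟩
  · rcases lt_trichotomy k' k with h | h | h
    · have hc : (k':ℝ) ≤ (k:ℝ) - 1 := by
        have : (k':ℝ) + 1 ≤ k := by exact_mod_cast h
        linarith
      have := V_pos hv
      exact absurd hmem.1 (by linarith)
    · exact hV v hv (h ▸ hmem)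
    · have hc : (k:ℝ) + 1 ≤ (k':ℝ) := by exact_mod_cast h
      have := V_le hv
      exact absurd hmem.2 (by linarith)
  · rcases lt_trichotomy k' k with h | h | h
    · have hc : (k':ℝ) ≤ (k:ℝ) - 1 := by
        have : (k':ℝ) + 1 ≤ k := by exact_mod_cast h
        linarith
      exact absurd hmem.1 (by linarith)
    · exact hknot (h ▸ hmem)
    · have hc : (k:ℝ) + 1 ≤ (k':ℝ) := by exact_mod_cast h
      exact absurd hmem.2 (by linarith)

private lemma S_gapN (k : ℕ) : ∀ s ∈ exampleS₂, s ∉ Ioo (k:ℝ) ((k:ℝ) + 1/4) := by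
  have h := S_gap_aux (k := k+1) (by omega) (a := (k:ℝ)) (b := (k:ℝ) + 1/4)
    (by push_cast; linarith) (by push_cast; linarith) ?_ ?_
  · exact h
  · intro v hv hmem
    have h1 := V_le hv
    push_cast at hmem
    have := hmem.2
    linarith
  · intro hmem
    push_cast at hmem
    linarith [hmem.2]

private lemma S_gapB {k l : ℕ} (hk : 1 ≤ k) (hl : 1 ≤ l) :
    ∀ s ∈ exampleS₂, s ∉ Ioo ((k:ℝ) - q l) ((k:ℝ) - 3/4 * q l) := by
  have hql := q_pos l
  have hh := q_le_half hl
  apply S_gap_aux hk (by linarith) (by linarith)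
  · intro v hv hmem
    have := V_gap2 hl hv (by linarith [hmem.2])
    linarith [hmem.1]
  · intro hmem
    linarith [hmem.2]

private lemma S_gapA {k l m : ℕ} (hk : 1 ≤ k) (hl : 1 ≤ l) (hm : 1 ≤ m) :
    ∀ s ∈ exampleS₂, s ∉ Ioo ((k:ℝ) - q l - q (l+m)) ((k:ℝ) - q l - q (l+m+1)) := by
  have hql := q_pos l
  have hh := q_le_half hl
  have h1 : q (l+m) ≤ q (l+1) := q_anti (by omega)
  have h2 : q (l+1) = q l / 2 := q_succ l
  have h3 := q_pos (l+m+1)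
  apply S_gap_aux hk (by linarith) (by linarith)
  · intro v hv hmem
    exact V_gap3 hl hm hv (by linarith [hmem.2]) (by linarith [hmem.1])
  · intro hmem
    linarith [hmem.2]

private lemma S_lb : ∀ s ∈ exampleS₂, s = 0 ∨ 1/4 ≤ s := by
  intro s hs
  rcases mem_S_iff.1 hs with ⟨k, hk, v, hv, rfl⟩ | ⟨k, rfl⟩
  · right
    have := V_le hv
    have : (1:ℝ) ≤ k := by exact_mod_cast hk
    linarith [V_le hv]
  · rcases Nat.eq_zero_or_pos k with h | h
    · left; rw [h]; norm_num
    · right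
      have : (1:ℝ) ≤ k := by exact_mod_cast h
      linarith

private lemma x_in_S_of_d {k : ℕ} (hk : 1 ≤ k) {l m : ℕ} (hl : 1 ≤ l) (hm : 1 ≤ m) :
    ((k:ℝ) - q l - q (l+m)) ∈ exampleS₂ :=
  mem_S_iff.2 (Or.inl ⟨k, hk, q l + q (l+m), Or.inl ⟨l, m, hl, hm, rfl⟩, by ring⟩)

private lemma b_in_S {k : ℕ} (hk : 1 ≤ k) {l : ℕ} (hl : 1 ≤ l) :
    ((k:ℝ) - q l) ∈ exampleS₂ :=
  mem_S_iff.2 (Or.inl ⟨k, hk, q l, Or.inr ⟨l, hl, rfl⟩, rfl⟩)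

private lemma n_in_S (k : ℕ) : ((k:ℝ)) ∈ exampleS₂ := mem_S_iff.2 (Or.inr ⟨k, rfl⟩)

private lemma gap_around {x : ℝ} (hx : x ∉ exampleS₂) :
    ∃ a b : ℝ, a < x ∧ x < b ∧ ∀ s ∈ exampleS₂, s ∉ Ioo a b := by
  rcases lt_or_ge x 0 with hneg | hpos
  · refine ⟨x - 1, 0, by linarith, hneg, ?_⟩
    intro s hs hmem
    rcases S_lb s hs with rfl | h
    · exact absurd hmem.2 (by norm_num)
    · linarith [hmem.2]
  rcases lt_or_ge x (1/4) with hsm | hbig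
  · have hx0 : x ≠ 0 := fun h => hx (h ▸ (by exact_mod_cast n_in_S 0))
    refine ⟨0, 1/4, lt_of_le_of_ne hpos (Ne.symm hx0), hsm, ?_⟩
    intro s hs hmem
    rcases S_lb s hs with rfl | h
    · exact absurd hmem.1 (by norm_num)
    · linarith [hmem.2]
  -- main case
  set k := ⌈x⌉₊ with hkdef
  have hk1 : 1 ≤ k := Nat.one_le_ceil_iff.2 (by linarith)
  have hxlek : x ≤ (k:ℝ) := Nat.le_ceil x
  have hxltk : x < (k:ℝ) := lt_of_le_of_ne hxlek (fun h => hx (h ▸ n_in_S k))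
  have hklt : (k:ℝ) < x + 1 := Nat.ceil_lt_add_one (by linarith)
  set d := (k:ℝ) - x with hddef
  have hd0 : 0 < d := by simp [hddef]; linarith
  have hd1 : d < 1 := by simp [hddef]; linarith
  rcases lt_or_ge (3/4) d with hlarge | hdle
  · -- x ∈ ((k-1 : ℕ), (k-1) + 1/4)
    have hcast : ((k-1 : ℕ):ℝ) = (k:ℝ) - 1 := by
      push_cast [hk1]; ring
    exact ⟨((k-1:ℕ):ℝ), ((k-1:ℕ):ℝ) + 1/4, by rw [hcast]; linarith, by rw [hcast]; linarith,
      fun s hs hmem => S_gapN (k-1) s hs hmem⟩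
  have hdne : d ≠ 3/4 := by
    intro h
    apply hx
    have : x = (k:ℝ) - q 1 - q (1+1) := by
      rw [show q 1 = 1/2 from q_one, show q (1+1) = 1/4 by rw [q_succ, q_one]; norm_num]
      simp only [hddef] at h; linarith
    rw [this]; exact x_in_S_of_d hk1 le_rfl le_rfl
  have hd34 : d < 3/4 := lt_of_le_of_ne hdle hdne
  have hex : ∃ n, 3/4 * q n ≤ d := by
    obtain ⟨n, hn⟩ := q_exists_lt hd0
    exact ⟨n, by linarith [q_pos n]⟩
  set l := Nat.find hex with hldef
  have hA : 3/4 * q l ≤ d := Nat.find_spec hex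
  have hl0 : l ≠ 0 := by
    intro h
    have := hA; rw [h, q_zero] at this; linarith
  have hl1 : 1 ≤ l := Nat.one_le_iff_ne_zero.2 hl0
  have hB : d < 3/2 * q l := by
    have hmin := Nat.find_min hex (show l - 1 < l by omega)
    push_neg at hmin
    have : q (l-1) = 2 * q l := by
      have : q ((l-1)+1) = q (l-1) / 2 := q_succ (l-1)
      rw [show l - 1 + 1 = l by omega] at this
      linarith
    linarith
  have hql := q_pos l
  rcases lt_trichotomy d (q l) with hcase | hcase | hcase
  · have hstrict : 3/4 * q l < d := by
      rcases lt_or_eq_of_le hA with h | h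
      · exact h
      · exfalso
        apply hx
        have hval : x = (k:ℝ) - q (l+1) - q ((l+1)+1) := by
          have e1 : q (l+1) = q l / 2 := q_succ l
          have e2 : q ((l+1)+1) = q (l+1) / 2 := q_succ (l+1)
          simp only [hddef] at h; linarith
        rw [hval]; exact x_in_S_of_d hk1 (by omega) le_rfl
    refine ⟨(k:ℝ) - q l, (k:ℝ) - 3/4 * q l, by simp only [hddef] at hcase ⊢; linarith,
      by simp only [hddef] at hstrict ⊢; linarith, S_gapB hk1 hl1⟩
  · exfalso
    apply hx
    have hval : x = (k:ℝ) - q l := by simp only [hddef] at hcase; linarith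
    rw [hval]; exact b_in_S hk1 hl1
  · set e := d - q l with hedef
    have he0 : 0 < e := by simp only [hedef]; linarith
    have heub : e < q (l+1) := by
      have : q (l+1) = q l / 2 := q_succ l
      simp only [hedef]; linarith
    have hex2 : ∃ n, q (l + n) ≤ e := by
      obtain ⟨n, hn⟩ := q_exists_lt he0
      exact ⟨n, le_trans (q_anti (Nat.le_add_left n l)) (le_of_lt hn)⟩
    set M := Nat.find hex2 with hMdef
    have hMspec : q (l + M) ≤ e := Nat.find_spec hex2
    have hM0 : M ≠ 0 := by
      intro h; rw [h] at hMspec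
      simp only [Nat.add_zero] at hMspec
      have : q (l+1) < q l := q_strictAnti (by omega)
      linarith
    have hM1 : M ≠ 1 := by
      intro h; rw [h] at hMspec; linarith
    set m := M - 1 with hmdef
    have hm1 : 1 ≤ m := by omega
    have hq1 : q (l + m + 1) ≤ e := by
      rw [show l + m + 1 = l + M by omega]; exact hMspec
    have hq2 : e < q (l + m) := by
      have := Nat.find_min hex2 (show m < M by omega)
      push_neg at this; exact this
    rcases lt_or_eq_of_le hq1 with hq1' | hq1'
    · refine ⟨(k:ℝ) - q l - q (l+m), (k:ℝ) - q l - q (l+m+1), ?_, ?_, S_gapA hk1 hl1 hm1⟩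
      · simp only [hedef, hddef] at hq2 ⊢; linarith
      · simp only [hedef, hddef] at hq1' ⊢; linarith
    · exfalso
      apply hx
      have hval : x = (k:ℝ) - q l - q (l + (m+1)) := by
        rw [show l + (m+1) = l + m + 1 by omega]
        simp only [hedef, hddef] at hq1'; linarith
      rw [hval]; exact x_in_S_of_d hk1 hl1 (by omega)

private lemma isClosed_S : IsClosed exampleS₂ := by
  rw [← isOpen_compl_iff, Metric.isOpen_iff]
  intro x hx
  obtain ⟨a, b, hax, hxb, hgap⟩ := gap_around hx
  refine ⟨min (x - a) (b - x), lt_min (by linarith) (by linarith), ?_⟩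
  intro y hy
  rw [Metric.mem_ball, Real.dist_eq, abs_lt] at hy
  obtain ⟨h1, h2⟩ := hy
  intro hyS
  have hm1 : min (x - a) (b - x) ≤ x - a := min_le_left _ _
  have hm2 : min (x - a) (b - x) ≤ b - x := min_le_right _ _
  exact hgap y hyS ⟨by linarith, by linarith⟩

private lemma countable_S : exampleS₂.Countable := by
  apply Set.Countable.union
  apply Set.Countable.union
  · apply Set.Countable.mono _ (Set.countable_range
      (fun t : ℕ×ℕ×ℕ => (t.1:ℝ) - (2:ℝ) ^ (-(t.2.1:ℤ)) - (2:ℝ) ^ (-((t.2.1:ℤ)+(t.2.2:ℤ)))))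
    rintro x ⟨k, l, m, _, _, _, rfl⟩
    exact ⟨⟨k, l, m⟩, rfl⟩
  · apply Set.Countable.mono _ (Set.countable_range
      (fun t : ℕ×ℕ => (t.1:ℝ) - (2:ℝ) ^ (-(t.2:ℤ))))
    rintro x ⟨k, l, _, _, rfl⟩
    exact ⟨⟨k, l⟩, rfl⟩
  · apply Set.Countable.mono _ (Set.countable_range (fun k : ℕ => (k:ℝ)))
    rintro x ⟨k, rfl⟩
    exact ⟨k, rfl⟩

private lemma periodic_S {s : ℝ} (hs : 0 ≤ s) : s ∈ exampleS₂ ↔ s + 1 ∈ exampleS₂ := by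
  rw [mem_S_iff, mem_S_iff]
  constructor
  · rintro (⟨k, hk, v, hv, rfl⟩ | ⟨k, rfl⟩)
    · exact Or.inl ⟨k+1, by omega, v, hv, by push_cast; ring⟩
    · exact Or.inr ⟨k+1, by push_cast; ring⟩
  · rintro (⟨k, hk, v, hv, heq⟩ | ⟨k, heq⟩)
    · have hv1 := V_pos hv
      have hv2 := V_le hv
      have hk2 : 2 ≤ k := by
        by_contra h
        have : k = 1 := by omega
        rw [this] at heq; norm_num at heq; linarith
      have hc : ((k-1:ℕ):ℝ) = (k:ℝ) - 1 := by
        rw [Nat.cast_sub (by omega)]; norm_num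
      exact Or.inl ⟨k-1, by omega, v, hv, by rw [hc]; linarith⟩
    · have hk1 : 1 ≤ k := by
        by_contra h
        have : k = 0 := by omega
        rw [this] at heq; norm_num at heq; linarith
      have hc : ((k-1:ℕ):ℝ) = (k:ℝ) - 1 := by
        rw [Nat.cast_sub (by omega)]; norm_num
      exact Or.inr ⟨k-1, by rw [hc]; linarith⟩

private lemma S_nonneg : ∀ s ∈ exampleS₂, 0 ≤ s := by
  intro s hs
  rcases S_lb s hs with rfl | h
  · exact le_rfl
  · linarith

private lemma right_gap : ∀ x ∈ exampleS₂, ∃ ε > 0, ∀ s ∈ exampleS₂, s ∉ Ioo x (x + ε) := by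
  intro x hx
  rcases mem_S_iff.1 hx with ⟨k, hk, v, (⟨l, m, hl, hm, rfl⟩ | ⟨l, hl, rfl⟩), rfl⟩ | ⟨k, rfl⟩
  · refine ⟨q (l+m+1), q_pos _, fun s hs hmem => S_gapA hk hl hm s hs ?_⟩
    have e := q_succ (l+m)
    exact ⟨by linarith [hmem.1], by linarith [hmem.2]⟩
  · refine ⟨q l / 4, by linarith [q_pos l], fun s hs hmem => S_gapB hk hl s hs ?_⟩
    exact ⟨by linarith [hmem.1], by linarith [hmem.2]⟩
  · exact ⟨1/4, by norm_num, fun s hs hmem => S_gapN k s hs hmem⟩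

private lemma not_strictAnti_S (f : ℕ → ℝ) (hf : ∀ n, f n ∈ exampleS₂) : ¬ StrictAnti f := by
  intro hanti
  have hbdd : BddBelow (Set.range f) := ⟨0, by rintro _ ⟨n, rfl⟩; exact S_nonneg _ (hf n)⟩
  have hlim : Tendsto f atTop (𝓝 (⨅ n, f n)) := tendsto_atTop_ciInf hanti.antitone hbdd
  set L := ⨅ n, f n with hL
  have hLS : L ∈ exampleS₂ := isClosed_S.mem_of_tendsto hlim (Eventually.of_forall hf)
  obtain ⟨ε, hε, hgap⟩ := right_gap L hLS
  have hgt : ∀ n, L < f n := fun n =>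
    lt_of_le_of_lt (ciInf_le hbdd (n+1)) (hanti (by omega))
  have hev : ∀ᶠ n in atTop, f n < L + ε := hlim.eventually_lt_const (by linarith)
  obtain ⟨n, hn⟩ := hev.exists
  exact hgap (f n) (hf n) ⟨hgt n, hn⟩

private lemma accPt_of_seq {x : ℝ} {A : Set ℝ} (u : ℕ → ℝ) (hu : ∀ n, u n ∈ A)
    (hne : ∀ n, u n ≠ x) (hlim : Tendsto u atTop (𝓝 x)) : AccPt x (𝓟 A) := by
  rw [accPt_principal_iff_clusterPt, ← mem_closure_iff_clusterPt]
  exact mem_closure_of_tendsto hlim (Eventually.of_forall (fun n => ⟨hu n, hne n⟩))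

private lemma not_accPt_of_gaps {x : ℝ} {A : Set ℝ} {a b : ℝ} (hax : a < x) (hxb : x < b)
    (hgl : ∀ s ∈ A, s ∉ Ioo a x) (hgr : ∀ s ∈ A, s ∉ Ioo x b) : ¬ AccPt x (𝓟 A) := by
  rw [accPt_iff_nhds]
  push_neg
  refine ⟨Ioo a b, Ioo_mem_nhds hax hxb, ?_⟩
  rintro y ⟨hy1, hy2⟩
  by_contra hne
  rcases lt_or_gt_of_ne hne with h | h
  · exact hgl y hy2 ⟨hy1.1, h⟩
  · exact hgr y hy2 ⟨h, hy1.2⟩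

private lemma tendsto_shift (l : ℕ) : Tendsto (fun n : ℕ => q (l + (n+1))) atTop (𝓝 0) :=
  q_tendsto.comp (tendsto_atTop_atTop.2 fun b => ⟨b, fun a ha => by omega⟩)

private def S1 : Set ℝ :=
  {x : ℝ | ∃ k l : ℕ, 1 ≤ k ∧ 1 ≤ l ∧ x = (k:ℝ) - q l} ∪ {x : ℝ | ∃ k : ℕ, 1 ≤ k ∧ x = (k:ℝ)}

private lemma b_accPt {k l : ℕ} (hk : 1 ≤ k) (hl : 1 ≤ l) :
    AccPt ((k:ℝ) - q l) (𝓟 exampleS₂) := by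
  apply accPt_of_seq (fun n => (k:ℝ) - q l - q (l + (n+1)))
  · exact fun n => x_in_S_of_d hk hl (by omega)
  · intro n
    have := q_pos (l + (n+1))
    intro h
    have : q (l + (n+1)) = 0 := by linarith [sub_eq_iff_eq_add.1 h]
    linarith
  · have h := (tendsto_const_nhds (x := (k:ℝ) - q l) (f := atTop (α := ℕ))).sub (tendsto_shift l)
    simpa using h

private lemma int_accPt_S1 {k : ℕ} (hk : 1 ≤ k) : AccPt ((k:ℝ)) (𝓟 S1) := by
  apply accPt_of_seq (fun n => (k:ℝ) - q (0 + (n+1)))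
  · exact fun n => Or.inl ⟨k, 0 + (n+1), hk, by omega, rfl⟩
  · intro n
    have := q_pos (0 + (n+1))
    intro h
    have : q (0 + (n+1)) = 0 := by linarith [sub_eq_iff_eq_add.1 h]
    linarith
  · have h := (tendsto_const_nhds (x := (k:ℝ)) (f := atTop (α := ℕ))).sub (tendsto_shift 0)
    simpa using h

private lemma int_accPt {k : ℕ} (hk : 1 ≤ k) : AccPt ((k:ℝ)) (𝓟 exampleS₂) := by
  apply accPt_of_seq (fun n => (k:ℝ) - q (0 + (n+1)))
  · exact fun n => b_in_S hk (l := 0 + (n+1)) (by omega)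
  · intro n
    have := q_pos (0 + (n+1))
    intro h
    have : q (0 + (n+1)) = 0 := by linarith [sub_eq_iff_eq_add.1 h]
    linarith
  · have h := (tendsto_const_nhds (x := (k:ℝ)) (f := atTop (α := ℕ))).sub (tendsto_shift 0)
    simpa using h

private lemma derivedSet_S : derivedSet exampleS₂ = S1 := by
  ext x
  constructor
  · intro hx
    have hxS : x ∈ exampleS₂ := (isClosed_iff_derivedSet_subset _).1 isClosed_S hx
    rcases mem_S_iff.1 hxS with ⟨k, hk, v, (⟨l, m, hl, hm, rfl⟩ | ⟨l, hl, rfl⟩), rfl⟩ | ⟨k, rfl⟩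
    · -- a-points are isolated
      exfalso
      have hql := q_pos l
      have hqlm := q_pos (l+m)
      have hqlm1 := q_pos (l+m+1)
      have e1 := q_succ (l+m)
      -- right gap
      have hgr : ∀ s ∈ exampleS₂, s ∉ Ioo ((k:ℝ) - (q l + q (l+m))) ((k:ℝ) - (q l + q (l+m)) + q (l+m+1)) := by
        intro s hs hmem
        exact S_gapA hk hl hm s hs ⟨by linarith [hmem.1], by linarith [hmem.2]⟩
      -- left gap
      rcases Nat.lt_or_ge m 2 with hm2 | hm2
      · have hm1 : m = 1 := by omega
        subst hm1
        rcases Nat.lt_or_ge l 2 with hl2 | hl2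
        · have hl1 : l = 1 := by omega
          subst hl1
          have hcast : ((k-1:ℕ):ℝ) = (k:ℝ) - 1 := by rw [Nat.cast_sub (by omega)]; norm_num
          have hq1 : q 1 = 1/2 := q_one
          have hq2 : q (1+1) = 1/4 := by rw [q_succ, q_one]; norm_num
          have hgl : ∀ s ∈ exampleS₂, s ∉ Ioo ((k:ℝ) - 1) ((k:ℝ) - (q 1 + q (1+1))) := by
            intro s hs hmem
            apply S_gapN (k-1) s hs
            rw [hcast]
            exact ⟨hmem.1, by rw [hq1, hq2] at hmem; linarith [hmem.2]⟩
          exact not_accPt_of_gaps (by rw [hq1, hq2]; linarith)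
            (by linarith) hgl hgr hx
        · -- l ≥ 2, m = 1 : left gap from S_gapB (l-1)
          have hcast : l - 1 + 1 = l := by omega
          have e2 : q (l-1) = 2 * q l := by
            have := q_succ (l-1); rw [hcast] at this; linarith
          have e3 := q_succ l
          have hgl : ∀ s ∈ exampleS₂, s ∉ Ioo ((k:ℝ) - q (l-1)) ((k:ℝ) - (q l + q (l+1))) := by
            intro s hs hmem
            apply S_gapB hk (show 1 ≤ l - 1 by omega) s hs
            exact ⟨hmem.1, by rw [e2]; linarith [hmem.2]⟩
          exact not_accPt_of_gaps (by rw [e2]; linarith) (by linarith) hgl hgr hx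
      · -- m ≥ 2 : left gap from S_gapA (m-1)
        have hcast : l + (m-1) + 1 = l + m := by omega
        have hqm1 := q_pos (l + (m-1))
        have e2 : q (l + (m-1)) = 2 * q (l+m) := by
          have := q_succ (l + (m-1)); rw [hcast] at this; linarith
        have hgl : ∀ s ∈ exampleS₂, s ∉ Ioo ((k:ℝ) - q l - q (l+(m-1))) ((k:ℝ) - (q l + q (l+m))) := by
          intro s hs hmem
          apply S_gapA hk hl (show 1 ≤ m - 1 by omega) s hs
          rw [hcast]
          exact ⟨hmem.1, by linarith [hmem.2]⟩
        exact not_accPt_of_gaps (by linarith) (by linarith) hgl hgr hx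
    · exact Or.inl ⟨k, l, hk, hl, rfl⟩
    · rcases Nat.eq_zero_or_pos k with h0 | h0
      · exfalso
        subst h0
        have hgl : ∀ s ∈ exampleS₂, s ∉ Ioo (-1 : ℝ) ((0:ℕ):ℝ) := by
          intro s hs hmem
          rcases S_lb s hs with rfl | h
          · exact absurd hmem.2 (by norm_num)
          · have := hmem.2; norm_num at this; linarith
        have hgr : ∀ s ∈ exampleS₂, s ∉ Ioo ((0:ℕ):ℝ) (((0:ℕ):ℝ) + 1/4) := S_gapN 0
        exact not_accPt_of_gaps (by norm_num) (by norm_num) hgl hgr hx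
      · exact Or.inr ⟨k, h0, rfl⟩
  · rintro (⟨k, l, hk, hl, rfl⟩ | ⟨k, hk, rfl⟩)
    · exact b_accPt hk hl
    · exact int_accPt hk

private lemma S1_loc {k l : ℕ} (hk : 1 ≤ k) (hl : 1 ≤ l) :
    ∀ s ∈ S1, s ∈ Ioo ((k:ℝ) - 2 * q l) ((k:ℝ) - q l / 2) → s = (k:ℝ) - q l := by
  have hql := q_pos l
  have hh := q_le_half hl
  intro s hs hmem
  rcases hs with ⟨k', l', hk', hl', rfl⟩ | ⟨k', hk', rfl⟩
  · have hql' := q_pos l'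
    have hh' := q_le_half hl'
    rcases lt_trichotomy k' k with h | h | h
    · exfalso
      have hc : (k':ℝ) ≤ (k:ℝ) - 1 := by
        have : (k':ℝ) + 1 ≤ k := by exact_mod_cast h
        linarith
      have := hmem.1
      linarith
    · subst h
      rcases lt_trichotomy l' l with h' | h' | h'
      · exfalso
        have e2 : q l ≤ q l' / 2 := by
          have h2 := q_anti (show l'+1 ≤ l by omega)
          have := q_succ l'
          linarith
        have := hmem.1
        linarith
      · rw [h']
      · exfalso
        have e2 : q l' ≤ q l / 2 := by
          have h2 := q_anti (show l+1 ≤ l' by omega)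
          have := q_succ l
          linarith
        have := hmem.2
        linarith
    · exfalso
      have hc : (k:ℝ) + 1 ≤ (k':ℝ) := by exact_mod_cast h
      have := hmem.2
      linarith
  · exfalso
    rcases lt_trichotomy k' k with h | h | h
    · have hc : (k':ℝ) ≤ (k:ℝ) - 1 := by
        have : (k':ℝ) + 1 ≤ k := by exact_mod_cast h
        linarith
      have := hmem.1
      linarith
    · subst h
      have := hmem.2
      linarith
    · have hc : (k:ℝ) + 1 ≤ (k':ℝ) := by exact_mod_cast h
      have := hmem.2
      linarith

private lemma derivedSet_S1 : derivedSet S1 = {x : ℝ | ∃ k : ℕ, 1 ≤ k ∧ x = (k:ℝ)} := by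
  ext x
  constructor
  · intro hx
    have hclosed : IsClosed S1 := derivedSet_S ▸ isClosed_derivedSet exampleS₂
    have hxS1 : x ∈ S1 := (isClosed_iff_derivedSet_subset _).1 hclosed hx
    rcases hxS1 with ⟨k, l, hk, hl, rfl⟩ | ⟨k, hk, rfl⟩
    · exfalso
      have hql := q_pos l
      have hloc := S1_loc hk hl
      have hgl : ∀ s ∈ S1, s ∉ Ioo ((k:ℝ) - 2 * q l) ((k:ℝ) - q l) := by
        intro s hs hmem
        have := hloc s hs ⟨hmem.1, by linarith [hmem.2]⟩
        linarith [hmem.2]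
      have hgr : ∀ s ∈ S1, s ∉ Ioo ((k:ℝ) - q l) ((k:ℝ) - q l / 2) := by
        intro s hs hmem
        have := hloc s hs ⟨by linarith [hmem.1], hmem.2⟩
        linarith [hmem.1]
      exact not_accPt_of_gaps (by linarith) (by linarith) hgl hgr hx
    · exact ⟨k, hk, rfl⟩
  · rintro ⟨k, hk, rfl⟩
    exact int_accPt_S1 hk

/-- `S` is closed, countable, 1-periodic, well-ordered by `<`, and its second derived
set equals `{1, 2, 3, …}`, in particular it is nonempty. -/
theorem stmt_17 :
    IsClosed exampleS₂ ∧ exampleS₂.Countable ∧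
      (∀ s : ℝ, 0 ≤ s → (s ∈ exampleS₂ ↔ s + 1 ∈ exampleS₂)) ∧
      (∀ f : ℕ → ℝ, (∀ n, f n ∈ exampleS₂) → ¬ StrictAnti f) ∧
      derivedSet (derivedSet exampleS₂) = {x : ℝ | ∃ k : ℕ, 1 ≤ k ∧ x = (k : ℝ)} ∧
      (derivedSet (derivedSet exampleS₂)).Nonempty := by
  refine ⟨isClosed_S, countable_S, fun s hs => periodic_S hs, not_strictAnti_S, ?_, ?_⟩
  · rw [derivedSet_S, derivedSet_S1]
  · rw [derivedSet_S, derivedSet_S1]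
    exact ⟨1, 1, le_rfl, by norm_num⟩
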